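/- arXiv:1511.02388 — 3 statements merged into one kernel-verified Lean document; each statement's English description precedes it below -/
import Mathlib

section
/- Let y_1, ..., y_M be M non-negative real numbers and let σ_d denote the d-th elementary symmetric function of the y_k. Then for each positive integer d ≤ M, σ_d ≥ (σ_1^d / d!) · (1 - C(d,2) · (∑_{k=1}^M y_k²) / σ_1²), where σ_1 = ∑ y_k (assuming σ_1 > 0). -/
open Finset

private lemma hr_split (M d : ℕ) (y : ℕ → ℝ) :
    (∑ k ∈ Finset.range M, y k) * ∑ A ∈ (Finset.range M).powersetCard d, ∏ j ∈ A, y j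
    = (∑ A ∈ (Finset.range M).powersetCard d, ∑ k ∈ Finset.range M \ A, y k * ∏ j ∈ A, y j)
    + ∑ A ∈ (Finset.range M).powersetCard d, ∑ k ∈ A, y k * ∏ j ∈ A, y j := by
  rw [Finset.mul_sum, ← Finset.sum_add_distrib]
  refine Finset.sum_congr rfl fun A hA => ?_
  have hAs : A ⊆ Finset.range M := (Finset.mem_powersetCard.mp hA).1
  rw [← Finset.sum_mul, ← Finset.sum_mul, ← add_mul, Finset.sum_sdiff hAs]

private lemma hr_key1 (M d : ℕ) (y : ℕ → ℝ) :
    (∑ A ∈ (Finset.range M).powersetCard d, ∑ k ∈ Finset.range M \ A, y k * ∏ j ∈ A, y j)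
    = ((d : ℝ) + 1) * ∑ B ∈ (Finset.range M).powersetCard (d+1), ∏ j ∈ B, y j := by
  have h1 : (∑ A ∈ (Finset.range M).powersetCard d,
        ∑ k ∈ Finset.range M \ A, y k * ∏ j ∈ A, y j)
      = ∑ B ∈ (Finset.range M).powersetCard (d+1), ∑ _k ∈ B, ∏ j ∈ B, y j := by
    rw [Finset.sum_sigma' ((Finset.range M).powersetCard d) (fun A => Finset.range M \ A)
        (fun A k => y k * ∏ j ∈ A, y j),
      Finset.sum_sigma' ((Finset.range M).powersetCard (d+1)) (fun B => B)
        (fun B _k => ∏ j ∈ B, y j)]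
    refine Finset.sum_nbij' (fun x => ⟨insert x.2 x.1, x.2⟩) (fun x => ⟨x.1.erase x.2, x.2⟩)
      ?_ ?_ ?_ ?_ ?_
    · rintro ⟨A, k⟩ hx
      simp only [Finset.mem_sigma, Finset.mem_powersetCard, Finset.mem_sdiff] at hx ⊢
      obtain ⟨⟨hAs, hAc⟩, hks, hkA⟩ := hx
      refine ⟨⟨Finset.insert_subset hks hAs, ?_⟩, Finset.mem_insert_self _ _⟩
      rw [Finset.card_insert_of_notMem hkA, hAc]
    · rintro ⟨B, k⟩ hx
      simp only [Finset.mem_sigma, Finset.mem_powersetCard, Finset.mem_sdiff] at hx ⊢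
      obtain ⟨⟨hBs, hBc⟩, hkB⟩ := hx
      refine ⟨⟨(Finset.erase_subset _ _).trans hBs, ?_⟩, hBs hkB, Finset.notMem_erase _ _⟩
      rw [Finset.card_erase_of_mem hkB, hBc]
      omega
    · rintro ⟨A, k⟩ hx
      simp only [Finset.mem_sigma, Finset.mem_powersetCard, Finset.mem_sdiff] at hx
      simp [Finset.erase_insert hx.2.2]
    · rintro ⟨B, k⟩ hx
      simp only [Finset.mem_sigma, Finset.mem_powersetCard] at hx
      simp [Finset.insert_erase hx.2]
    · rintro ⟨A, k⟩ hx
      simp only [Finset.mem_sigma, Finset.mem_powersetCard, Finset.mem_sdiff] at hx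
      exact (Finset.prod_insert hx.2.2).symm
  rw [h1, Finset.mul_sum]
  refine Finset.sum_congr rfl fun B hB => ?_
  rw [Finset.sum_const, (Finset.mem_powersetCard.mp hB).2, nsmul_eq_mul]
  push_cast; ring

private lemma hr_key2 (M d : ℕ) (y : ℕ → ℝ) (hy : ∀ k, 0 ≤ y k) (hd : 1 ≤ d) :
    (∑ A ∈ (Finset.range M).powersetCard d, ∑ k ∈ A, y k * ∏ j ∈ A, y j)
    ≤ (∑ k ∈ Finset.range M, y k ^ 2) *
        ∑ B ∈ (Finset.range M).powersetCard (d-1), ∏ j ∈ B, y j := by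
  have h1 : (∑ A ∈ (Finset.range M).powersetCard d, ∑ k ∈ A, y k * ∏ j ∈ A, y j)
      = ∑ k ∈ Finset.range M, ∑ B ∈ ((Finset.range M).erase k).powersetCard (d-1),
          y k ^ 2 * ∏ j ∈ B, y j := by
    rw [Finset.sum_sigma' ((Finset.range M).powersetCard d) (fun A => A)
        (fun A k => y k * ∏ j ∈ A, y j),
      Finset.sum_sigma' (Finset.range M)
        (fun k => ((Finset.range M).erase k).powersetCard (d-1))
        (fun k B => y k ^ 2 * ∏ j ∈ B, y j)]
    refine Finset.sum_nbij' (fun x => ⟨x.2, x.1.erase x.2⟩) (fun x => ⟨insert x.1 x.2, x.1⟩)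
      ?_ ?_ ?_ ?_ ?_
    · rintro ⟨A, k⟩ hx
      simp only [Finset.mem_sigma, Finset.mem_powersetCard] at hx ⊢
      obtain ⟨⟨hAs, hAc⟩, hkA⟩ := hx
      refine ⟨hAs hkA, Finset.erase_subset_erase _ hAs, ?_⟩
      rw [Finset.card_erase_of_mem hkA, hAc]
    · rintro ⟨k, B⟩ hx
      simp only [Finset.mem_sigma, Finset.mem_powersetCard] at hx ⊢
      obtain ⟨hks, hBs, hBc⟩ := hx
      have hkB : k ∉ B := fun h => Finset.notMem_erase k _ (hBs h)
      refine ⟨⟨Finset.insert_subset hks (hBs.trans (Finset.erase_subset _ _)), ?_⟩,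
        Finset.mem_insert_self _ _⟩
      rw [Finset.card_insert_of_notMem hkB, hBc]
      omega
    · rintro ⟨A, k⟩ hx
      simp only [Finset.mem_sigma, Finset.mem_powersetCard] at hx
      simp [Finset.insert_erase hx.2]
    · rintro ⟨k, B⟩ hx
      simp only [Finset.mem_sigma, Finset.mem_powersetCard] at hx
      have hkB : k ∉ B := fun h => Finset.notMem_erase k _ (hx.2.1 h)
      simp [Finset.erase_insert hkB]
    · rintro ⟨A, k⟩ hx
      simp only [Finset.mem_sigma, Finset.mem_powersetCard] at hx
      rw [← Finset.mul_prod_erase A y hx.2]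
      ring
  rw [h1, Finset.sum_mul]
  refine Finset.sum_le_sum fun k hk => ?_
  rw [← Finset.mul_sum]
  refine mul_le_mul_of_nonneg_left ?_ (sq_nonneg _)
  exact Finset.sum_le_sum_of_subset_of_nonneg
    (Finset.powersetCard_mono (Finset.erase_subset _ _))
    (fun B _ _ => Finset.prod_nonneg fun j _ => hy j)

private lemma hr_enonneg (M d : ℕ) (y : ℕ → ℝ) (hy : ∀ k, 0 ≤ y k) :
    0 ≤ ∑ A ∈ (Finset.range M).powersetCard d, ∏ j ∈ A, y j :=
  Finset.sum_nonneg fun A _ => Finset.prod_nonneg fun j _ => hy j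

private lemma hr_T2nonneg (M d : ℕ) (y : ℕ → ℝ) (hy : ∀ k, 0 ≤ y k) :
    0 ≤ ∑ A ∈ (Finset.range M).powersetCard d, ∑ k ∈ A, y k * ∏ j ∈ A, y j :=
  Finset.sum_nonneg fun A _ => Finset.sum_nonneg fun k _ =>
    mul_nonneg (hy k) (Finset.prod_nonneg fun j _ => hy j)

private lemma hr_upper (M : ℕ) (y : ℕ → ℝ) (hy : ∀ k, 0 ≤ y k) :
    ∀ d : ℕ, (d.factorial : ℝ) * ∑ A ∈ (Finset.range M).powersetCard d, ∏ j ∈ A, y j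
      ≤ (∑ k ∈ Finset.range M, y k) ^ d := by
  have hs1 : 0 ≤ ∑ k ∈ Finset.range M, y k := Finset.sum_nonneg fun k _ => hy k
  intro d
  induction d with
  | zero => simp
  | succ d ih =>
    have hstep : ((d : ℝ) + 1) * ∑ A ∈ (Finset.range M).powersetCard (d+1), ∏ j ∈ A, y j
        ≤ (∑ k ∈ Finset.range M, y k) * ∑ A ∈ (Finset.range M).powersetCard d, ∏ j ∈ A, y j := by
      rw [← hr_key1 M d y, hr_split M d y]
      linarith [hr_T2nonneg M d y hy]
    calc ((d+1).factorial : ℝ) * ∑ A ∈ (Finset.range M).powersetCard (d+1), ∏ j ∈ A, y j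
        = (d.factorial : ℝ) * (((d : ℝ) + 1) *
            ∑ A ∈ (Finset.range M).powersetCard (d+1), ∏ j ∈ A, y j) := by
          rw [Nat.factorial_succ]; push_cast; ring
      _ ≤ (d.factorial : ℝ) * ((∑ k ∈ Finset.range M, y k) *
            ∑ A ∈ (Finset.range M).powersetCard d, ∏ j ∈ A, y j) :=
          mul_le_mul_of_nonneg_left hstep (by positivity)
      _ = (∑ k ∈ Finset.range M, y k) *
            ((d.factorial : ℝ) * ∑ A ∈ (Finset.range M).powersetCard d, ∏ j ∈ A, y j) := by ring
      _ ≤ (∑ k ∈ Finset.range M, y k) * (∑ k ∈ Finset.range M, y k) ^ d :=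
          mul_le_mul_of_nonneg_left ih hs1
      _ = (∑ k ∈ Finset.range M, y k) ^ (d+1) := by ring

private lemma hr_lower (M : ℕ) (y : ℕ → ℝ) (hy : ∀ k, 0 ≤ y k) :
    ∀ d : ℕ, 1 ≤ d → d ≤ M →
    (∑ k ∈ Finset.range M, y k) ^ d -
      (d.choose 2 : ℝ) * (∑ k ∈ Finset.range M, y k ^ 2) *
        (∑ k ∈ Finset.range M, y k) ^ (d - 2)
    ≤ (d.factorial : ℝ) * ∑ A ∈ (Finset.range M).powersetCard d, ∏ j ∈ A, y j := by
  have hs1 : 0 ≤ ∑ k ∈ Finset.range M, y k := Finset.sum_nonneg fun k _ => hy k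
  have hS2 : 0 ≤ ∑ k ∈ Finset.range M, y k ^ 2 := Finset.sum_nonneg fun k _ => sq_nonneg _
  intro d
  induction d with
  | zero => omega
  | succ d ih =>
    intro _ hdM
    rcases Nat.eq_zero_or_pos d with rfl | hd1
    · -- d + 1 = 1
      simp only [Nat.choose, Nat.factorial]
      norm_num
      simp [Finset.powersetCard_one, Finset.sum_map]
    · have ih' := ih hd1 (by omega)
      set s1 := ∑ k ∈ Finset.range M, y k with hs1def
      set S2 := ∑ k ∈ Finset.range M, y k ^ 2 with hS2def
      set ed := ∑ A ∈ (Finset.range M).powersetCard d, ∏ j ∈ A, y j with hed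
      set ed1 := ∑ A ∈ (Finset.range M).powersetCard (d+1), ∏ j ∈ A, y j with hed1
      set edm := ∑ A ∈ (Finset.range M).powersetCard (d-1), ∏ j ∈ A, y j with hedm
      set T2 := ∑ A ∈ (Finset.range M).powersetCard d, ∑ k ∈ A, y k * ∏ j ∈ A, y j with hT2
      have F1 : ((d : ℝ) + 1) * ed1 = s1 * ed - T2 := by
        rw [← hr_key1 M d y, hr_split M d y]; rw [hT2]; ring
      have F2 : T2 ≤ S2 * edm := hr_key2 M d y hy hd1
      have F4 : ((d-1).factorial : ℝ) * edm ≤ s1 ^ (d-1) := hr_upper M y hy (d-1)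
      have F5 : (d : ℝ) * ((d-1).factorial : ℝ) = (d.factorial : ℝ) := by
        rw [← Nat.cast_mul, Nat.mul_factorial_pred hd1.ne']
      have F7 : ((d+1).choose 2 : ℝ) = (d.choose 2 : ℝ) + d := by
        rw [Nat.choose_succ_succ, Nat.choose_one_right]; push_cast; ring
      have F8 : (d.choose 2 : ℝ) * s1 ^ (d-2) * s1 = (d.choose 2 : ℝ) * s1 ^ (d-1) := by
        match d, hd1 with
        | 1, _ => norm_num
        | (n+2), _ =>
          have h2 : n + 2 - 2 = n := by omega
          have h1 : n + 2 - 1 = n + 1 := by omega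
          rw [h2, h1, pow_succ]; ring
      have F9 : d + 1 - 2 = d - 1 := by omega
      rw [F9, F7]
      have key : ((d+1).factorial : ℝ) * ed1 = (d.factorial : ℝ) * (s1 * ed) -
          (d.factorial : ℝ) * T2 := by
        calc ((d+1).factorial : ℝ) * ed1
            = (d.factorial : ℝ) * (((d : ℝ) + 1) * ed1) := by
              rw [Nat.factorial_succ]; push_cast; ring
          _ = (d.factorial : ℝ) * (s1 * ed - T2) := by rw [F1]
          _ = (d.factorial : ℝ) * (s1 * ed) - (d.factorial : ℝ) * T2 := by ring
      have h2' : (d.factorial : ℝ) * T2 ≤ (d.factorial : ℝ) * (S2 * edm) :=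
        mul_le_mul_of_nonneg_left F2 (by positivity)
      have heq : (d.factorial : ℝ) * (S2 * edm)
          = (d : ℝ) * S2 * (((d-1).factorial : ℝ) * edm) := by rw [← F5]; ring
      have h4' : (d : ℝ) * S2 * (((d-1).factorial : ℝ) * edm)
          ≤ (d : ℝ) * S2 * s1 ^ (d-1) := by
        refine mul_le_mul_of_nonneg_left F4 ?_
        positivity
      have h3' : s1 * (s1 ^ d - (d.choose 2 : ℝ) * S2 * s1 ^ (d-2)) ≤ s1 * ((d.factorial : ℝ) * ed) :=
        mul_le_mul_of_nonneg_left ih' hs1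
      have expand : s1 * (s1 ^ d - (d.choose 2 : ℝ) * S2 * s1 ^ (d-2))
          = s1 ^ (d+1) - (d.choose 2 : ℝ) * S2 * s1 ^ (d-1) := by
        linear_combination (-S2) * F8
      linarith [key, h2', heq, h4', h3', expand]

/-- Lemma (Halberstam–Roth): lower bound for elementary symmetric functions. -/
theorem stmt_0 (M : ℕ) (y : ℕ → ℝ) (hy : ∀ k, 0 ≤ y k)
    (d : ℕ) (hd : 1 ≤ d) (hdM : d ≤ M)
    (hσ1 : 0 < ∑ k ∈ Finset.range M, y k) :
    ((∑ k ∈ Finset.range M, y k) ^ d / (Nat.factorial d)) *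
      (1 - (d.choose 2) * (∑ k ∈ Finset.range M, (y k) ^ 2) /
        (∑ k ∈ Finset.range M, y k) ^ 2)
    ≤ ∑ A ∈ (Finset.range M).powersetCard d, ∏ k ∈ A, y k := by
  have h := hr_lower M y hy d hd hdM
  have hfact : (0 : ℝ) < (d.factorial : ℝ) := by positivity
  rcases Nat.lt_or_ge d 2 with hd2 | hd2
  · -- d = 1
    have : d = 1 := by omega
    subst this
    simp only [Nat.factorial_one, Nat.cast_one, pow_one]
    norm_num
    simp [Finset.powersetCard_one, Finset.sum_map]
  · -- d ≥ 2
    have hne : (∑ k ∈ Finset.range M, y k) ≠ 0 := ne_of_gt hσ1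
    have hpow : (∑ k ∈ Finset.range M, y k) ^ (d - 2)
        = (∑ k ∈ Finset.range M, y k) ^ d / (∑ k ∈ Finset.range M, y k) ^ 2 :=
      pow_sub₀ _ hne hd2
    rw [hpow] at h
    rw [div_mul_eq_mul_div, div_le_iff₀ hfact]
    have hexp : (∑ k ∈ Finset.range M, y k) ^ d *
        (1 - (d.choose 2 : ℝ) * (∑ k ∈ Finset.range M, (y k) ^ 2) /
          (∑ k ∈ Finset.range M, y k) ^ 2)
        = (∑ k ∈ Finset.range M, y k) ^ d - (d.choose 2 : ℝ) *
            (∑ k ∈ Finset.range M, y k ^ 2) *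
            ((∑ k ∈ Finset.range M, y k) ^ d / (∑ k ∈ Finset.range M, y k) ^ 2) := by
      ring
    rw [hexp]
    linarith [h]
end

section
/- Let a be a positive integer and let π be a prime of ℤ[i] with π ≡ 1 (mod (1+i)³) lying over a rational prime p ≡ 1 (mod 4). Then a divides the norm ‖π − 1‖ if and only if π − 1 is divisible in ℤ[i] by some element α of the set S_a. -/
open Zsqrtd

namespace Stmt6Aux

noncomputable abbrev lam : GaussianInt := 1 + Zsqrtd.sqrtd

lemma norm_dvd_of_dvd {x y : GaussianInt} (h : x ∣ y) : Zsqrtd.norm x ∣ Zsqrtd.norm y := by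
  obtain ⟨c, rfl⟩ := h
  exact ⟨Zsqrtd.norm c, by rw [Zsqrtd.norm_mul]⟩

set_option synthInstance.maxHeartbeats 1000000 in
lemma prime_of_norm_natAbs_prime {z : GaussianInt} (h : (Zsqrtd.norm z).natAbs.Prime) :
    Prime z := by
  rw [← irreducible_iff_prime]
  constructor
  · intro hu
    rw [← Zsqrtd.norm_eq_one_iff] at hu
    exact h.ne_one hu
  · intro u w huw
    have key : (Zsqrtd.norm u).natAbs * (Zsqrtd.norm w).natAbs = (Zsqrtd.norm z).natAbs := by
      rw [← Int.natAbs_mul, ← Zsqrtd.norm_mul, ← huw]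
    rw [← key] at h
    rcases Nat.prime_mul_iff.mp h with ⟨-, hw⟩ | ⟨-, hu⟩
    · exact Or.inr (Zsqrtd.norm_eq_one_iff.mp hw)
    · exact Or.inl (Zsqrtd.norm_eq_one_iff.mp hu)

lemma lam_prime : Prime lam := prime_of_norm_natAbs_prime (by norm_num [show (Zsqrtd.norm lam).natAbs = 2 by decide])

lemma star_lam_assoc : Associated (star lam) lam := by
  refine Associated.symm ⟨⟨-Zsqrtd.sqrtd, Zsqrtd.sqrtd, by decide, by decide⟩, ?_⟩
  decide

lemma emult_star (p x : GaussianInt) : emultiplicity (star p) (star x) = emultiplicity p x :=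
  emultiplicity_map_eq (starMulAut : GaussianInt ≃* GaussianInt)

lemma emult_star' {p x : GaussianInt} (h : Associated (star p) p) :
    emultiplicity p (star x) = emultiplicity p x := by
  rw [← emult_star p x]
  rw [emultiplicity_eq_emultiplicity_iff]
  intro n
  exact ((h.pow_pow (n := n)).dvd_iff_dvd_left).symm

/-- Key lemma for self-conjugate primes. -/
lemma key_inert {ϖ x : GaussianInt} (hϖ : Prime ϖ) (hstar : Associated (star ϖ) ϖ)
    (hx : x ≠ 0) (v : ℕ) :
    ϖ ^ v ∣ x * star x ↔ ϖ ^ ((v + 1) / 2) ∣ x := by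
  have hf : FiniteMultiplicity ϖ x := FiniteMultiplicity.of_not_isUnit hϖ.not_isUnit hx
  have hm := emultiplicity_mul hϖ (a := x) (b := star x)
  rw [emult_star' hstar, hf.emultiplicity_eq_multiplicity] at hm
  rw [pow_dvd_iff_le_emultiplicity, hm, hf.pow_dvd_iff_le_multiplicity,
    ← Nat.cast_add, Nat.cast_le]
  omega

/-- Key lemma for `q = 2`. -/
lemma key_two {x : GaussianInt} (hx : x ≠ 0) (v : ℕ) :
    (2 : GaussianInt) ^ v ∣ x * star x ↔ lam ^ v ∣ x := by
  have h2 : Associated (lam ^ (2 * v)) ((2:GaussianInt) ^ v) := by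
    have : Associated (lam ^ 2) (2:GaussianInt) := by
      refine ⟨⟨-Zsqrtd.sqrtd, Zsqrtd.sqrtd, by decide, by decide⟩, ?_⟩
      decide
    rw [pow_mul]
    exact this.pow_pow
  rw [← h2.dvd_iff_dvd_left, key_inert lam_prime star_lam_assoc hx (2*v)]
  have : (2 * v + 1) / 2 = v := by omega
  rw [this]

lemma norm_eq_q {q : ℕ} (hq2 : 2 ≤ q) {ϖ : GaussianInt} (hϖq : ϖ * star ϖ = (q:GaussianInt)) :
    Zsqrtd.norm ϖ = q := by
  have h := congrArg Zsqrtd.norm hϖq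
  rw [Zsqrtd.norm_mul, Zsqrtd.norm_conj, Zsqrtd.norm_natCast] at h
  have hn : 0 ≤ Zsqrtd.norm ϖ := GaussianInt.norm_nonneg ϖ
  rcases mul_self_eq_mul_self_iff.mp h with h1 | h1
  · exact h1
  · exfalso
    have : (2:ℤ) ≤ (q:ℤ) := by exact_mod_cast hq2
    omega

lemma not_dvd_star {q : ℕ} (hq : q.Prime) (hq4 : q % 4 = 1) {ϖ : GaussianInt}
    (hϖ : Prime ϖ) (hϖq : ϖ * star ϖ = (q : GaussianInt)) : ¬ ϖ ∣ star ϖ := by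
  intro hdvd
  have hnq : Zsqrtd.norm ϖ = q := norm_eq_q hq.two_le hϖq
  have h2re : ϖ + star ϖ = ((2:GaussianInt)) * ((ϖ.re : ℤ) : GaussianInt) := by
    ext <;> simp [Zsqrtd.re_star, Zsqrtd.im_star] <;> ring
  have hd : ϖ ∣ (2:GaussianInt) * ((ϖ.re : ℤ) : GaussianInt) := by
    rw [← h2re]; exact dvd_add dvd_rfl hdvd
  rcases hϖ.dvd_mul.mp hd with h2 | hre
  · -- ϖ ∣ 2, so q ∣ 4
    have : Zsqrtd.norm ϖ ∣ Zsqrtd.norm 2 := norm_dvd_of_dvd h2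
    rw [hnq, show Zsqrtd.norm (2:GaussianInt) = 4 by decide] at this
    have : (q:ℤ) ∣ ((4:ℕ):ℤ) := by exact_mod_cast this
    have h4 : q ∣ 4 := by exact_mod_cast this
    have hd2 : q ∣ 2 := hq.dvd_of_dvd_pow (n := 2) (by rw [show (2:ℕ)^2 = 4 from rfl]; exact h4)
    have := Nat.le_of_dvd (by norm_num) hd2
    have := hq.two_le
    omega
  · -- ϖ ∣ re
    have hnr : Zsqrtd.norm ϖ ∣ Zsqrtd.norm ((ϖ.re : ℤ) : GaussianInt) := norm_dvd_of_dvd hre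
    rw [hnq, Zsqrtd.norm_intCast] at hnr
    have hqI : Prime (q:ℤ) := Int.prime_iff_natAbs_prime.mpr (by simpa using hq)
    have hdre : (q:ℤ) ∣ ϖ.re := (hqI.dvd_mul.mp hnr).elim id id
    have hsum : ϖ.re * ϖ.re + ϖ.im * ϖ.im = (q:ℤ) := by
      have : Zsqrtd.norm ϖ = ϖ.re * ϖ.re + ϖ.im * ϖ.im := by
        simp [Zsqrtd.norm]; try ring
      omega
    rcases eq_or_ne ϖ.re 0 with h0 | h0
    · rw [h0] at hsum
      simp only [zero_mul, zero_add] at hsum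
      have hsq : ϖ.im.natAbs * ϖ.im.natAbs = q := by
        have := congrArg Int.natAbs hsum
        simpa [Int.natAbs_mul] using this
      have hdq : ϖ.im.natAbs ∣ q := ⟨_, hsq.symm⟩
      have h2q := hq.two_le
      rcases hq.eq_one_or_self_of_dvd _ hdq with h1 | h1 <;> rw [h1] at hsq <;> nlinarith
    · have habs : (q:ℤ) ≤ |ϖ.re| := Int.le_of_dvd (abs_pos.mpr h0) ((dvd_abs _ _).mpr hdre)
      have h1 : (q:ℤ) * q ≤ |ϖ.re| * |ϖ.re| := by
        have : (0:ℤ) ≤ q := by positivity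
        nlinarith
      rw [abs_mul_abs_self] at h1
      have := hq.two_le
      have h2 : (2:ℤ) ≤ (q:ℤ) := by exact_mod_cast this
      nlinarith [mul_self_nonneg ϖ.im]




lemma isCoprime_of_norm_coprime {u w : GaussianInt} (hu : u ≠ 0)
    (h : Nat.Coprime (Zsqrtd.norm u).natAbs (Zsqrtd.norm w).natAbs) : IsCoprime u w := by
  apply EuclideanDomain.isCoprime_of_dvd
  · rintro ⟨rfl, -⟩; exact hu rfl
  · intro z hz hz0 hzu hzw
    have h1 := Int.natAbs_dvd_natAbs.mpr (norm_dvd_of_dvd hzu)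
    have h2 := Int.natAbs_dvd_natAbs.mpr (norm_dvd_of_dvd hzw)
    have hone : (Zsqrtd.norm z).natAbs = 1 :=
      Nat.dvd_one.mp (h ▸ Nat.dvd_gcd h1 h2)
    exact hz (Zsqrtd.norm_eq_one_iff.mp hone)

/-- Key lemma for split primes (forward). -/
lemma key_split_fwd {q : ℕ} (hq : q.Prime) (hq4 : q % 4 = 1) {ϖ x : GaussianInt}
    (hϖ : Prime ϖ) (hϖq : ϖ * star ϖ = (q : GaussianInt)) (hx : x ≠ 0) (v : ℕ)
    (hdvd : (q : GaussianInt) ^ v ∣ x * star x) :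
    ∃ f ≤ v, ϖ ^ f * (star ϖ) ^ (v - f) ∣ x := by
  have hstar : Prime (star ϖ) :=
    (MulEquiv.prime_iff (starMulAut : GaussianInt ≃* GaussianInt) (p := ϖ)).mpr hϖ
  have hfx : FiniteMultiplicity ϖ x := FiniteMultiplicity.of_not_isUnit hϖ.not_isUnit hx
  have hfsx : FiniteMultiplicity (star ϖ) x :=
    FiniteMultiplicity.of_not_isUnit hstar.not_isUnit hx
  set m1 := multiplicity ϖ x with hm1
  set m2 := multiplicity (star ϖ) x with hm2
  -- ϖ^v ∣ x * star x
  have hv : ϖ ^ v ∣ x * star x := dvd_trans (pow_dvd_pow_of_dvd ⟨star ϖ, hϖq.symm⟩ v) hdvd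
  have hswap : emultiplicity ϖ (star x) = emultiplicity (star ϖ) x := by
    conv_lhs => rw [show ϖ = star (star ϖ) from (star_star ϖ).symm]
    exact emult_star (star ϖ) x
  have hkey : (v : ℕ∞) ≤ emultiplicity ϖ x + emultiplicity (star ϖ) x := by
    have := pow_dvd_iff_le_emultiplicity.mp hv
    rwa [emultiplicity_mul hϖ, hswap] at this
  rw [hfx.emultiplicity_eq_multiplicity, hfsx.emultiplicity_eq_multiplicity,
    ← Nat.cast_add, Nat.cast_le] at hkey
  refine ⟨min v m1, Nat.min_le_left _ _, ?_⟩
  have hcop : IsCoprime ϖ (star ϖ) :=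
    (dvd_or_isCoprime _ _ hϖ.irreducible).resolve_left (not_dvd_star hq hq4 hϖ hϖq)
  refine (hcop.pow).mul_dvd ?_ ?_
  · exact dvd_trans (pow_dvd_pow _ (Nat.min_le_right _ _)) (pow_multiplicity_dvd ϖ x)
  · exact dvd_trans (pow_dvd_pow _ (by omega)) (pow_multiplicity_dvd (star ϖ) x)

/-- Backward: a product `ϖ^f (star ϖ)^(v-f)` dividing `x` forces `q^v ∣ x * star x`. -/
lemma key_split_bwd {q : ℕ} {ϖ x : GaussianInt}
    (hϖq : ϖ * star ϖ = (q : GaussianInt)) {v f : ℕ} (hf : f ≤ v)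
    (hdvd : ϖ ^ f * (star ϖ) ^ (v - f) ∣ x) :
    (q : GaussianInt) ^ v ∣ x * star x := by
  set α := ϖ ^ f * (star ϖ) ^ (v - f) with hα
  have h1 : α * star α ∣ x * star x := by
    refine mul_dvd_mul hdvd ?_
    have := congrArg star hdvd.choose_spec
    exact ⟨star hdvd.choose, by rw [this, star_mul']⟩
  have h2 : α * star α = (q : GaussianInt) ^ v := by
    have e : α * star α = (ϖ * star ϖ) ^ (f + (v - f)) := by
      rw [hα, star_mul', star_pow, star_pow, star_star, mul_pow, pow_add, pow_add]; ring
    rw [e, hϖq, Nat.add_sub_cancel' hf]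
  rwa [h2] at h1

/-- Splitting a product over the prime factors into the 2-part, the 3 mod 4 part and
the 1 mod 4 part. -/
lemma prod_split {M : Type*} [CommMonoid M] (s : Finset ℕ) (hs : ∀ q ∈ s, q.Prime)
    (g : ℕ → M) (h2 : 2 ∉ s → g 2 = 1) :
    ∏ q ∈ s, g q = g 2 * (∏ q ∈ s.filter (fun q => q % 4 = 3), g q) *
      (∏ q ∈ s.filter (fun q => q % 4 = 1), g q) := by
  classical
  have key : ∀ q ∈ s, q = 2 ∨ q % 4 = 3 ∨ q % 4 = 1 := by
    intro q hq
    rcases (hs q hq).eq_two_or_odd with h | h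
    · exact Or.inl h
    · right
      have : q % 2 = q % 4 % 2 := (Nat.mod_mod_of_dvd q (by norm_num)).symm
      omega
  rw [← Finset.prod_filter_mul_prod_filter_not s (fun q => q = 2),
    ← Finset.prod_filter_mul_prod_filter_not (s.filter (fun q => ¬ q = 2)) (fun q => q % 4 = 3)]
  have e3 : (s.filter (fun q => ¬ q = 2)).filter (fun q => q % 4 = 3)
      = s.filter (fun q => q % 4 = 3) := by
    ext q
    simp only [Finset.mem_filter]
    constructor
    · rintro ⟨⟨h1, -⟩, h3⟩; exact ⟨h1, h3⟩
    · rintro ⟨h1, h3⟩; exact ⟨⟨h1, by omega⟩, h3⟩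
  have e1 : (s.filter (fun q => ¬ q = 2)).filter (fun q => ¬ q % 4 = 3)
      = s.filter (fun q => q % 4 = 1) := by
    ext q
    simp only [Finset.mem_filter]
    constructor
    · rintro ⟨⟨h1, hne⟩, h3⟩
      rcases key q h1 with h | h | h
      · exact absurd h hne
      · exact absurd h h3
      · exact ⟨h1, h⟩
    · rintro ⟨h1, hm⟩; exact ⟨⟨h1, by omega⟩, by omega⟩
  have e2 : ∏ q ∈ s.filter (fun q => q = 2), g q = g 2 := by
    rw [Finset.filter_eq']
    split_ifs with h
    · simp
    · simp [h2 h]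
  rw [e3, e1, e2, mul_assoc]



lemma star_dvd {x y : GaussianInt} (h : x ∣ y) : star x ∣ star y := by
  obtain ⟨c, rfl⟩ := h; exact ⟨star c, by rw [star_mul']⟩

lemma gnorm_prod {β : Type*} (s : Finset β) (g : β → GaussianInt) :
    Zsqrtd.norm (∏ q ∈ s, g q) = ∏ q ∈ s, Zsqrtd.norm (g q) :=
  map_prod Zsqrtd.normMonoidHom g s

lemma gnorm_pow (z : GaussianInt) (n : ℕ) : Zsqrtd.norm (z ^ n) = Zsqrtd.norm z ^ n :=
  map_pow Zsqrtd.normMonoidHom z n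


end Stmt6Aux



/-- A typical element of the set `S_a`: given `a = ∏ q^{v_q}`, a choice `πq` of Gaussian
primes above the primes `q ≡ 1 (mod 4)`, and a choice of exponents `f`, the element
`(1+i)^{v_2} · ∏_{q ≡ 3 (4)} q^{⌈v_q/2⌉} · ∏_{q ≡ 1 (4)} πq^{f q} · π̄q^{v_q - f q}`. -/
noncomputable def SaElem (a : ℕ) (πq : ℕ → GaussianInt) (f : ℕ → ℕ) : GaussianInt :=
  (1 + Zsqrtd.sqrtd) ^ (a.factorization 2) *
    (∏ q ∈ a.primeFactors.filter (fun q => q % 4 = 3),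
      (q : GaussianInt) ^ ((a.factorization q + 1) / 2)) *
    (∏ q ∈ a.primeFactors.filter (fun q => q % 4 = 1),
      (πq q) ^ (f q) * (star (πq q)) ^ (a.factorization q - f q))

/-- The set `S_a` of Gaussian integers. -/
noncomputable def Sa (a : ℕ) (πq : ℕ → GaussianInt) : Set GaussianInt :=
  {α | ∃ f : ℕ → ℕ, (∀ q, f q ≤ a.factorization q) ∧ α = SaElem a πq f}

open Zsqrtd Stmt6Aux

/-- For a Gaussian prime `π ≡ 1 (mod (1+i)³)` above a rational prime `p ≡ 1 (mod 4)`,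
`a` divides `‖π - 1‖` if and only if some element of `S_a` divides `π - 1` in `ℤ[i]`. -/
theorem stmt_6 (a : ℕ) (ha : 0 < a) (πq : ℕ → GaussianInt)
    (hπq : ∀ q ∈ a.primeFactors, q % 4 = 1 → πq q * star (πq q) = (q : GaussianInt))
    (hπqprime : ∀ q ∈ a.primeFactors, q % 4 = 1 → Prime (πq q))
    (p : ℕ) (hp : p.Prime) (hp4 : p % 4 = 1)
    (π : GaussianInt) (hπ : Prime π) (hπp : π * star π = (p : GaussianInt))
    (hprimary : (1 + Zsqrtd.sqrtd) ^ 3 ∣ π - 1) :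
    (a : ℤ) ∣ Zsqrtd.norm (π - 1) ↔ ∃ α ∈ Sa a πq, α ∣ π - 1 := by
  set x := π - 1 with hxdef
  have hx : x ≠ 0 := by
    intro h
    exact hπ.not_unit (by rw [sub_eq_zero.mp h]; exact isUnit_one)
  have hprimes : ∀ q ∈ a.primeFactors, q.Prime := fun q hq => Nat.prime_of_mem_primeFactors hq
  have hv2 : 2 ∉ a.primeFactors → a.factorization 2 = 0 := by
    intro h
    rw [← Nat.support_factorization] at h
    exact Finsupp.notMem_support_iff.mp h
  have hmod : ∀ q ∈ a.primeFactors, q ≠ 2 → q % 4 = 3 ∨ q % 4 = 1 := by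
    intro q hq h2
    rcases (hprimes q hq).eq_two_or_odd with h | h
    · exact absurd h h2
    · have : q % 2 = q % 4 % 2 := (Nat.mod_mod_of_dvd q (by norm_num)).symm
      omega
  have hnormπq : ∀ q ∈ a.primeFactors, q % 4 = 1 → Zsqrtd.norm (πq q) = q := fun q hq h1 =>
    norm_eq_q (hprimes q hq).two_le (hπq q hq h1)
  constructor
  · -- forward direction
    intro h
    have hQ : ∀ q ∈ a.primeFactors, (q : GaussianInt) ^ (a.factorization q) ∣ x * star x := by
      intro q hqmem
      have h1 : (q : ℤ) ^ (a.factorization q) ∣ Zsqrtd.norm x := by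
        refine dvd_trans ?_ h
        have := Int.natCast_dvd_natCast.mpr (Nat.ordProj_dvd a q)
        push_cast at this
        exact this
      have h2 := map_dvd (Int.castRingHom GaussianInt) h1
      simp only [Int.coe_castRingHom, map_pow, Int.cast_natCast] at h2
      rwa [Zsqrtd.norm_eq_mul_conj] at h2
    have H : ∀ q : ℕ, ∃ fq, fq ≤ a.factorization q ∧
        (q ∈ a.primeFactors → q % 4 = 1 →
          (πq q) ^ fq * (star (πq q)) ^ (a.factorization q - fq) ∣ x) := by
      intro q
      by_cases hc : q ∈ a.primeFactors ∧ q % 4 = 1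
      · obtain ⟨fq, hfq, hdvd⟩ := key_split_fwd (hprimes q hc.1) hc.2
          (hπqprime q hc.1 hc.2) (hπq q hc.1 hc.2) hx (a.factorization q) (hQ q hc.1)
        exact ⟨fq, hfq, fun _ _ => hdvd⟩
      · exact ⟨0, Nat.zero_le _, fun h1 h2 => absurd ⟨h1, h2⟩ hc⟩
    choose f hf1 hf2 using H
    set T : ℕ → GaussianInt := fun q =>
      if q = 2 then lam ^ (a.factorization 2)
      else if q % 4 = 3 then (q : GaussianInt) ^ ((a.factorization q + 1) / 2)
      else (πq q) ^ (f q) * (star (πq q)) ^ (a.factorization q - f q) with hT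
    have hT2 : 2 ∉ a.primeFactors → T 2 = 1 := by
      intro h
      simp only [hT, if_pos rfl, hv2 h, pow_zero]
    have hTdvd : ∀ q ∈ a.primeFactors, T q ∣ x := by
      intro q hq
      by_cases h2 : q = 2
      · subst h2
        simp only [hT, if_pos rfl]
        have := hQ 2 hq
        rw [Nat.cast_ofNat] at this
        exact (key_two hx (a.factorization 2)).mp this
      · rcases hmod q hq h2 with h3 | h1
        · simp only [hT, if_neg h2, if_pos h3]
          haveI : Fact (q.Prime) := ⟨hprimes q hq⟩
          have hqprime : Prime (q : GaussianInt) :=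
            (GaussianInt.prime_iff_mod_four_eq_three_of_nat_prime q).mpr h3
          have hstar : Associated (star (q : GaussianInt)) (q : GaussianInt) := by
            rw [star_natCast]
          exact (key_inert hqprime hstar hx (a.factorization q)).mp (hQ q hq)
        · have hne3 : ¬ q % 4 = 3 := by omega
          simp only [hT, if_neg h2, if_neg hne3]
          exact hf2 q hq h1
    have hTnorm : ∀ q ∈ a.primeFactors, ∃ e, (Zsqrtd.norm (T q)).natAbs = q ^ e := by
      intro q hq
      by_cases h2 : q = 2
      · subst h2
        refine ⟨a.factorization 2, ?_⟩
        simp only [hT, if_pos rfl, gnorm_pow, show Zsqrtd.norm lam = 2 by decide]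
        simp [Int.natAbs_pow]
      · rcases hmod q hq h2 with h3 | h1
        · refine ⟨2 * ((a.factorization q + 1) / 2), ?_⟩
          simp only [hT, if_neg h2, if_pos h3, gnorm_pow, Zsqrtd.norm_natCast]
          rw [Int.natAbs_pow, Int.natAbs_mul, Int.natAbs_natCast, ← pow_two, ← pow_mul]
        · have hne3 : ¬ q % 4 = 3 := by omega
          refine ⟨a.factorization q, ?_⟩
          simp only [hT, if_neg h2, if_neg hne3, Zsqrtd.norm_mul, gnorm_pow,
            Zsqrtd.norm_conj, hnormπq q hq h1]
          rw [Int.natAbs_mul, Int.natAbs_pow, Int.natAbs_pow, Int.natAbs_natCast,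
            ← pow_add, Nat.add_sub_cancel' (hf1 q)]
    have hTne : ∀ q ∈ a.primeFactors, T q ≠ 0 := by
      intro q hq h0
      obtain ⟨e, he⟩ := hTnorm q hq
      rw [h0] at he
      simp only [Zsqrtd.norm_zero, Int.natAbs_zero] at he
      exact (pow_ne_zero e (hprimes q hq).pos.ne') he.symm
    have hTcop : (↑a.primeFactors : Set ℕ).Pairwise (Function.onFun IsCoprime T) := by
      intro q hq q' hq' hne
      simp only [Finset.mem_coe] at hq hq'
      obtain ⟨e, he⟩ := hTnorm q hq
      obtain ⟨e', he'⟩ := hTnorm q' hq'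
      refine isCoprime_of_norm_coprime (hTne q hq) ?_
      rw [he, he']
      exact Nat.Coprime.pow _ _ ((Nat.coprime_primes (hprimes q hq) (hprimes q' hq')).mpr hne)
    have h3eq : (∏ q ∈ a.primeFactors.filter (fun q => q % 4 = 3), T q)
        = ∏ q ∈ a.primeFactors.filter (fun q => q % 4 = 3),
            (q : GaussianInt) ^ ((a.factorization q + 1) / 2) := by
      refine Finset.prod_congr rfl (fun q hq => ?_)
      rw [Finset.mem_filter] at hq
      have h2 : q ≠ 2 := by omega
      simp only [hT, if_neg h2, if_pos hq.2]
    have h1eq : (∏ q ∈ a.primeFactors.filter (fun q => q % 4 = 1), T q)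
        = ∏ q ∈ a.primeFactors.filter (fun q => q % 4 = 1),
            (πq q) ^ (f q) * (star (πq q)) ^ (a.factorization q - f q) := by
      refine Finset.prod_congr rfl (fun q hq => ?_)
      rw [Finset.mem_filter] at hq
      have h2 : q ≠ 2 := by omega
      have h3 : ¬ q % 4 = 3 := by omega
      simp only [hT, if_neg h2, if_neg h3]
    have hT2eq : T 2 = lam ^ (a.factorization 2) := by simp [hT]
    have hSaEq : SaElem a πq f = ∏ q ∈ a.primeFactors, T q := by
      rw [prod_split a.primeFactors hprimes T hT2, h3eq, h1eq, hT2eq]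
      rfl
    refine ⟨SaElem a πq f, ⟨f, hf1, rfl⟩, ?_⟩
    rw [hSaEq]
    exact Finset.prod_dvd_of_coprime hTcop hTdvd
  · -- backward direction
    rintro ⟨α, ⟨f, hf, rfl⟩, hαdvd⟩
    have h1 : SaElem a πq f * star (SaElem a πq f) ∣ x * star x :=
      mul_dvd_mul hαdvd (star_dvd hαdvd)
    rw [← Zsqrtd.norm_eq_mul_conj, ← Zsqrtd.norm_eq_mul_conj] at h1
    have h2 : Zsqrtd.norm (SaElem a πq f) ∣ Zsqrtd.norm x :=
      (Zsqrtd.intCast_dvd_intCast _ _).mp h1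
    refine dvd_trans ?_ h2
    -- compute the norm of SaElem
    have hnorm : Zsqrtd.norm (SaElem a πq f) =
        2 ^ (a.factorization 2) *
          (∏ q ∈ a.primeFactors.filter (fun q => q % 4 = 3),
            ((q : ℤ) * q) ^ ((a.factorization q + 1) / 2)) *
          (∏ q ∈ a.primeFactors.filter (fun q => q % 4 = 1),
            (q : ℤ) ^ (a.factorization q)) := by
      unfold SaElem
      rw [Zsqrtd.norm_mul, Zsqrtd.norm_mul, gnorm_pow,
        show Zsqrtd.norm (1 + Zsqrtd.sqrtd : GaussianInt) = 2 by decide,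
        gnorm_prod, gnorm_prod]
      refine congrArg₂ (· * ·) (congrArg₂ (· * ·) rfl ?_) ?_
      · refine Finset.prod_congr rfl (fun q hq => ?_)
        rw [gnorm_pow, Zsqrtd.norm_natCast]
      · refine Finset.prod_congr rfl (fun q hq => ?_)
        rw [Finset.mem_filter] at hq
        rw [Zsqrtd.norm_mul, gnorm_pow, gnorm_pow, Zsqrtd.norm_conj, hnormπq q hq.1 hq.2,
          ← pow_add, Nat.add_sub_cancel' (hf q)]
    rw [hnorm]
    have ha' : (∏ q ∈ a.primeFactors, q ^ a.factorization q) = a :=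
      Nat.factorization_prod_pow_eq_self ha.ne'
    have hsplit : a = 2 ^ (a.factorization 2) *
        (∏ q ∈ a.primeFactors.filter (fun q => q % 4 = 3), q ^ (a.factorization q)) *
        (∏ q ∈ a.primeFactors.filter (fun q => q % 4 = 1), q ^ (a.factorization q)) :=
      calc a = ∏ q ∈ a.primeFactors, q ^ a.factorization q := ha'.symm
        _ = _ := prod_split a.primeFactors hprimes (fun q => q ^ a.factorization q)
          (fun h => by show (2:ℕ) ^ a.factorization 2 = 1; rw [hv2 h, pow_zero])
    have hcast : (a : ℤ) = 2 ^ (a.factorization 2) *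
        (∏ q ∈ a.primeFactors.filter (fun q => q % 4 = 3), (q : ℤ) ^ (a.factorization q)) *
        (∏ q ∈ a.primeFactors.filter (fun q => q % 4 = 1), (q : ℤ) ^ (a.factorization q)) := by
      conv_lhs => rw [hsplit]
      push_cast
      ring
    rw [hcast]
    refine mul_dvd_mul (mul_dvd_mul dvd_rfl ?_) dvd_rfl
    refine Finset.prod_dvd_prod_of_dvd _ _ (fun q hq => ?_)
    rw [← pow_two, ← pow_mul]
    exact pow_dvd_pow _ (by omega)
end

section
/- For any positive integer a with prime factorization a = ∏_q q^{v_q}, the set S_a has cardinality ∏_{q ∣ a, q ≡ 1 (mod 4)} (v_q + 1), and in particular |S_a| ≤ τ(a), the number of divisors of a. -/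
open Finset

/-- If `p^m * (star p)^(k-m) * A = p^n * (star p)^(k-n) * B` with `p` prime,
`p ∤ star p`, `p ∤ A`, then `n ≤ m`. -/
lemma gi_exp_le {p A B : GaussianInt} (hp : Prime p) (hsp : ¬ p ∣ star p)
    (hA : ¬ p ∣ A) {m n k : ℕ}
    (h : p ^ m * star p ^ (k - m) * A = p ^ n * star p ^ (k - n) * B) : n ≤ m := by
  by_contra hlt
  push_neg at hlt
  have h1 : p ^ n ∣ p ^ m * (star p ^ (k - m) * A) := by
    rw [← mul_assoc, h, mul_assoc]
    exact Dvd.intro _ rfl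
  have h2 : p ^ m * p ^ (n - m) ∣ p ^ m * (star p ^ (k - m) * A) := by
    rwa [← pow_add, Nat.add_sub_cancel' hlt.le]
  have h3 : p ^ (n - m) ∣ star p ^ (k - m) * A :=
    (mul_dvd_mul_iff_left (pow_ne_zero m hp.ne_zero)).mp h2
  have h4 : p ∣ star p ^ (k - m) * A :=
    dvd_trans (dvd_pow_self p (Nat.sub_ne_zero_of_lt hlt)) h3
  rcases hp.dvd_mul.mp h4 with h5 | h5
  · exact hsp (hp.dvd_of_dvd_pow h5)
  · exact hA h5

lemma gi_exp_eq {p A B : GaussianInt} (hp : Prime p) (hsp : ¬ p ∣ star p)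
    (hA : ¬ p ∣ A) (hB : ¬ p ∣ B) {m n k : ℕ}
    (h : p ^ m * star p ^ (k - m) * A = p ^ n * star p ^ (k - n) * B) : m = n :=
  le_antisymm (gi_exp_le hp hsp hB h.symm) (gi_exp_le hp hsp hA h)

lemma gi_prod_inj (p : ℕ → GaussianInt) (v f f' : ℕ → ℕ) (s : Finset ℕ)
    (hp : ∀ q ∈ s, Prime (p q))
    (hsp : ∀ q ∈ s, ¬ p q ∣ star (p q))
    (hdist : ∀ q ∈ s, ∀ r ∈ s, q ≠ r → ¬ p q ∣ p r ∧ ¬ p q ∣ star (p r))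
    (heq : (∏ q ∈ s, p q ^ f q * star (p q) ^ (v q - f q))
        = ∏ q ∈ s, p q ^ f' q * star (p q) ^ (v q - f' q)) :
    ∀ q ∈ s, f q = f' q := by
  classical
  induction s using Finset.induction_on with
  | empty => intro q hq; exact absurd hq (Finset.notMem_empty q)
  | insert _ _ ha ih =>
    rename_i a s
    rw [Finset.prod_insert ha, Finset.prod_insert ha] at heq
    have hpa : Prime (p a) := hp a (Finset.mem_insert_self a s)
    have hnd : ∀ g : ℕ → ℕ, ¬ p a ∣ ∏ q ∈ s, p q ^ g q * star (p q) ^ (v q - g q) := by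
      intro g hdvd
      obtain ⟨q, hq, hdvd⟩ := hpa.exists_mem_finset_dvd hdvd
      have hne : a ≠ q := fun h => ha (h ▸ hq)
      rcases hpa.dvd_mul.mp hdvd with h5 | h5
      · exact (hdist a (Finset.mem_insert_self a s) q (Finset.mem_insert_of_mem hq) hne).1
          (hpa.dvd_of_dvd_pow h5)
      · exact (hdist a (Finset.mem_insert_self a s) q (Finset.mem_insert_of_mem hq) hne).2
          (hpa.dvd_of_dvd_pow h5)
    have hfa : f a = f' a :=
      gi_exp_eq hpa (hsp a (Finset.mem_insert_self a s)) (hnd f) (hnd f') heq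
    intro q hq
    rcases Finset.mem_insert.mp hq with rfl | hq'
    · exact hfa
    · have hne : p a ^ f a * star (p a) ^ (v a - f a) ≠ 0 :=
        mul_ne_zero (pow_ne_zero _ hpa.ne_zero)
          (pow_ne_zero _ (star_ne_zero.mpr hpa.ne_zero))
      rw [hfa] at heq
      have heq' := mul_left_cancel₀ (hfa ▸ hne) heq
      exact ih (fun r hr => hp r (Finset.mem_insert_of_mem hr))
        (fun r hr => hsp r (Finset.mem_insert_of_mem hr))
        (fun r hr r' hr' => hdist r (Finset.mem_insert_of_mem hr) r' (Finset.mem_insert_of_mem hr'))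
        heq' q hq'

/-- A prime `p` in `ℤ[i]` above a rational prime `q ≡ 1 (mod 4)` does not divide its conjugate. -/
lemma gi_not_dvd_star {q : ℕ} (hq : q.Prime) (h4 : q % 4 = 1) {p : GaussianInt}
    (hpq : p * star p = (q : GaussianInt)) (hp : Prime p) : ¬ p ∣ star p := by
  intro hdvd
  set x := p.re with hx
  set y := p.im with hy
  have hnorm : x * x + y * y = (q : ℤ) := by
    have h1 : ((p.norm : ℤ) : GaussianInt) = ((q : ℤ) : GaussianInt) := by
      rw [Zsqrtd.norm_eq_mul_conj, hpq]; push_cast; ring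
    have h2 : p.norm = (q : ℤ) := Int.cast_injective h1
    rw [Zsqrtd.norm_def] at h2
    linarith
  have hqZ : Prime (q : ℤ) := Nat.prime_iff_prime_int.mp hq
  -- q does not divide x
  have hqx : ¬ (q : ℤ) ∣ x := by
    intro h
    have hx2 : (q : ℤ) ∣ x * x := h.mul_right x
    have hy2 : (q : ℤ) ∣ y * y := by
      have : y * y = (q : ℤ) - x * x := by linarith
      rw [this]; exact dvd_sub (dvd_refl _) hx2
    have hyd : (q : ℤ) ∣ y := (hqZ.dvd_mul.mp hy2).elim id id
    have hq2 : (q : ℤ) * (q : ℤ) ∣ (q : ℤ) := by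
      have hd : (q : ℤ) * (q : ℤ) ∣ x * x + y * y :=
        dvd_add (mul_dvd_mul h h) (mul_dvd_mul hyd hyd)
      rwa [hnorm] at hd
    have hqpos : (0 : ℤ) < q := by exact_mod_cast hq.pos
    have := Int.le_of_dvd hqpos hq2
    nlinarith [hq.two_le, (show (2:ℤ) ≤ q by exact_mod_cast hq.two_le)]
  -- p divides 2x
  have h2x : p ∣ ((2 * x : ℤ) : GaussianInt) := by
    have hps : p + star p = ((2 * x : ℤ) : GaussianInt) := by
      ext
      · simp [Zsqrtd.re_add]; ring
      · simp [Zsqrtd.im_add]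
    rw [← hps]
    exact dvd_add dvd_rfl hdvd
  have hpqd : p ∣ ((q : ℤ) : GaussianInt) := by
    rw [show (((q : ℤ)) : GaussianInt) = (q : GaussianInt) by push_cast; ring, ← hpq]
    exact Dvd.intro _ rfl
  -- coprimality
  have hq2x : ¬ (q : ℤ) ∣ 2 * x := by
    intro h
    rcases hqZ.dvd_mul.mp h with h5 | h5
    · have hnat : q ∣ 2 := by exact_mod_cast h5
      have := Nat.le_of_dvd (by norm_num) hnat
      have := hq.two_le
      omega
    · exact hqx h5
  have hcop : IsCoprime ((q : ℤ)) (2 * x) := hqZ.coprime_iff_not_dvd.mpr hq2x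
  have hcop' := (hcop.symm).map (Int.castRingHom GaussianInt)
  simp only [map_mul, map_ofNat, Int.coe_castRingHom] at hcop'
  have : IsUnit p := hcop'.isUnit_of_dvd' (by exact_mod_cast h2x) (by exact_mod_cast hpqd)
  exact hp.not_unit this

lemma gi_not_dvd_of_coprime {p z : GaussianInt} {q r : ℕ} (hp : Prime p)
    (hpq : p ∣ (q : GaussianInt)) (hz : z ∣ (r : GaussianInt)) (hcop : Nat.Coprime q r) :
    ¬ p ∣ z := by
  intro h
  have hc : IsCoprime ((q : ℤ)) ((r : ℤ)) := Nat.Coprime.isCoprime hcop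
  have hc' := hc.map (Int.castRingHom GaussianInt)
  simp only [Int.coe_castRingHom, Int.cast_natCast] at hc'
  exact hp.not_unit (hc'.isUnit_of_dvd' hpq (h.trans hz))

/-- Extension of a partial function on `P` by zero. -/
def SaExt (P : Finset ℕ) (g : ∀ q ∈ P, ℕ) : ℕ → ℕ :=
  fun q => if h : q ∈ P then g q h else 0

lemma SaElem_congr (a : ℕ) (πq : ℕ → GaussianInt) (f f' : ℕ → ℕ)
    (h : ∀ q ∈ a.primeFactors.filter (fun q => q % 4 = 1), f q = f' q) :
    SaElem a πq f = SaElem a πq f' := by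
  unfold SaElem
  apply congrArg
  exact Finset.prod_congr rfl fun q hq => by rw [h q hq]

lemma SaElem_prefix_ne_zero (a : ℕ) :
    ((1 + Zsqrtd.sqrtd : GaussianInt) ^ (a.factorization 2) *
      (∏ q ∈ a.primeFactors.filter (fun q => q % 4 = 3),
        (q : GaussianInt) ^ ((a.factorization q + 1) / 2))) ≠ 0 := by
  apply mul_ne_zero
  · exact pow_ne_zero _ (by simp [Zsqrtd.ext_iff])
  · apply Finset.prod_ne_zero_iff.mpr
    intro q hq
    have hq' : q ≠ 0 :=
      (Nat.prime_of_mem_primeFactors (Finset.mem_filter.mp hq).1).ne_zero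
    exact pow_ne_zero _ (by exact_mod_cast Nat.cast_ne_zero.mpr hq')

lemma SaElem_cancel (a : ℕ) (πq : ℕ → GaussianInt) (f f' : ℕ → ℕ)
    (h : SaElem a πq f = SaElem a πq f') :
    (∏ q ∈ a.primeFactors.filter (fun q => q % 4 = 1),
        πq q ^ f q * star (πq q) ^ (a.factorization q - f q))
      = ∏ q ∈ a.primeFactors.filter (fun q => q % 4 = 1),
        πq q ^ f' q * star (πq q) ^ (a.factorization q - f' q) := by
  unfold SaElem at h
  exact mul_left_cancel₀ (SaElem_prefix_ne_zero a) h

/-- `|S_a| = ∏_{q ∣ a, q ≡ 1 (4)} (v_q + 1)`, and in particular `|S_a| ≤ τ(a)`. -/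
theorem stmt_7 (a : ℕ) (ha : 0 < a) (πq : ℕ → GaussianInt)
    (hπq : ∀ q ∈ a.primeFactors, q % 4 = 1 → πq q * star (πq q) = (q : GaussianInt))
    (hπqprime : ∀ q ∈ a.primeFactors, q % 4 = 1 → Prime (πq q)) :
    (Sa a πq).ncard
        = ∏ q ∈ a.primeFactors.filter (fun q => q % 4 = 1), (a.factorization q + 1) ∧
      (Sa a πq).ncard ≤ a.divisors.card := by
  classical
  have hmem : ∀ q ∈ a.primeFactors.filter (fun q => q % 4 = 1),
      q ∈ a.primeFactors ∧ q % 4 = 1 := by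
    intro q hq; exact Finset.mem_filter.mp hq
  set P := a.primeFactors.filter (fun q => q % 4 = 1) with hP
  have hprime : ∀ q ∈ P, Prime (πq q) := fun q hq =>
    hπqprime q (hmem q hq).1 (hmem q hq).2
  have hstarnd : ∀ q ∈ P, ¬ πq q ∣ star (πq q) := fun q hq =>
    gi_not_dvd_star (Nat.prime_of_mem_primeFactors (hmem q hq).1) (hmem q hq).2
      (hπq q (hmem q hq).1 (hmem q hq).2) (hprime q hq)
  have hdvdq : ∀ q ∈ P, πq q ∣ (q : GaussianInt) := by
    intro q hq
    rw [← hπq q (hmem q hq).1 (hmem q hq).2]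
    exact Dvd.intro _ rfl
  have hdist : ∀ q ∈ P, ∀ r ∈ P, q ≠ r → ¬ πq q ∣ πq r ∧ ¬ πq q ∣ star (πq r) := by
    intro q hq r hr hne
    have hcop : Nat.Coprime q r :=
      (Nat.coprime_primes (Nat.prime_of_mem_primeFactors (hmem q hq).1)
        (Nat.prime_of_mem_primeFactors (hmem r hr).1)).mpr hne
    have hstar : star (πq r) ∣ (r : GaussianInt) := by
      rw [← hπq r (hmem r hr).1 (hmem r hr).2]
      exact Dvd.intro _ (mul_comm _ _)
    exact ⟨gi_not_dvd_of_coprime (hprime q hq) (hdvdq q hq) (hdvdq r hr) hcop,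
      gi_not_dvd_of_coprime (hprime q hq) (hdvdq q hq) hstar hcop⟩
  -- the finset parametrizing S_a
  have hSa : Sa a πq
      = ↑((P.pi (fun q => Finset.range (a.factorization q + 1))).image
          (fun g => SaElem a πq (SaExt P g))) := by
    ext α
    simp only [Sa, Set.mem_setOf_eq, Finset.coe_image, Set.mem_image, Finset.mem_coe]
    constructor
    · rintro ⟨f, hf, rfl⟩
      refine ⟨fun q _ => f q, Finset.mem_pi.mpr fun q _ => Finset.mem_range.mpr
        (Nat.lt_succ_of_le (hf q)), ?_⟩
      refine SaElem_congr a πq _ _ fun q hq => ?_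
      exact dif_pos hq
    · rintro ⟨g, hg, rfl⟩
      refine ⟨SaExt P g, fun q => ?_, rfl⟩
      unfold SaExt
      split
      · next h =>
          exact Nat.lt_succ_iff.mp (Finset.mem_range.mp (Finset.mem_pi.mp hg q h))
      · exact Nat.zero_le _
  -- injectivity
  have hinj : Set.InjOn (fun g => SaElem a πq (SaExt P g))
      ↑(P.pi (fun q => Finset.range (a.factorization q + 1))) := by
    intro g hg g' hg' heq
    have heq' := SaElem_cancel a πq (SaExt P g) (SaExt P g') heq
    rw [← hP] at heq'
    have := gi_prod_inj πq (fun q => a.factorization q) (SaExt P g) (SaExt P g') P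
      hprime hstarnd hdist heq'
    funext q hq
    have h1 := this q hq
    unfold SaExt at h1
    rwa [dif_pos hq, dif_pos hq] at h1
  have hcard : (Sa a πq).ncard = ∏ q ∈ P, (a.factorization q + 1) := by
    rw [hSa, Set.ncard_coe_finset, Finset.card_image_of_injOn hinj, Finset.card_pi]
    exact Finset.prod_congr rfl fun q _ => Finset.card_range _
  refine ⟨hcard, ?_⟩
  rw [hcard, Nat.card_divisors ha.ne']
  exact Finset.prod_le_prod_of_subset_of_one_le' (Finset.filter_subset _ _)
    (fun i _ _ => Nat.succ_le_succ (Nat.zero_le _))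
end
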